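/- arXiv:2305.07526 — 3 statements merged into one kernel-verified Lean document; each statement's English description precedes it below -/
import Mathlib

section
/- Let φ : 𝔻 → 𝔻 be holomorphic with a fixed point α ∈ 𝔻, and suppose there exist a non-constant holomorphic Ψ : 𝔻 → ℂ and a constant τ with |τ| = 1 such that Ψ ∘ φ = τ·Ψ. Then |φ'(α)| = 1. -/
open Complex Set Metric Filter

theorem eigen_inner_fixed_point_abs_deriv_one
    (φ : ℂ → ℂ) (hφ : DifferentiableOn ℂ φ (ball (0:ℂ) 1))
    (hmaps : MapsTo φ (ball (0:ℂ) 1) (ball (0:ℂ) 1))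
    (α : ℂ) (hα : α ∈ ball (0:ℂ) 1) (hfix : φ α = α)
    (Ψ : ℂ → ℂ) (hΨ : DifferentiableOn ℂ Ψ (ball (0:ℂ) 1))
    (hnc : ¬ ∃ c : ℂ, ∀ z ∈ ball (0:ℂ) 1, Ψ z = c)
    (τ : ℂ) (hτ : ‖τ‖ = 1)
    (heq : ∀ z ∈ ball (0:ℂ) 1, Ψ (φ z) = τ * Ψ z) :
    ‖deriv φ α‖ = 1 := by
  have hball : IsOpen (ball (0:ℂ) 1) := isOpen_ball
  have hnhds : ball (0:ℂ) 1 ∈ nhds α := hball.mem_nhds hα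
  have hΨa : AnalyticAt ℂ Ψ α := hΨ.analyticAt hnhds
  have hφa : DifferentiableAt ℂ φ α := hφ.differentiableAt hnhds
  -- the shifted function g
  set g : ℂ → ℂ := fun z => Ψ z - Ψ α with hgdef
  have hga : AnalyticAt ℂ g α := hΨa.sub analyticAt_const
  have hΨα : Ψ α = τ * Ψ α := by
    have := heq α hα; rwa [hfix] at this
  have hgφ : ∀ z ∈ ball (0:ℂ) 1, g (φ z) = τ * g z := by
    intro z hz
    simp only [hgdef]
    rw [heq z hz, mul_sub, ← hΨα]
  have hgα : g α = 0 := by simp [hgdef]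
  -- g is not eventually zero near α
  have hne : ¬ (∀ᶠ z in nhds α, g z = 0) := by
    intro hev
    apply hnc
    refine ⟨Ψ α, fun z hz => ?_⟩
    have hΨon : AnalyticOnNhd ℂ Ψ (ball (0:ℂ) 1) := hΨ.analyticOnNhd hball
    have hcon : AnalyticOnNhd ℂ (fun _ : ℂ => Ψ α) (ball (0:ℂ) 1) :=
      fun _ _ => analyticAt_const
    have := hΨon.eqOn_of_preconnected_of_eventuallyEq hcon
      (convex_ball (0:ℂ) 1).isPreconnected hα
      (hev.mono (fun w hw => by simpa [hgdef, sub_eq_zero] using hw))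
    exact this hz
  -- order of g at α
  have hot : analyticOrderAt g α ≠ ⊤ := fun h => hne (analyticOrderAt_eq_top.mp h)
  obtain ⟨n, hn⟩ : ∃ n : ℕ, analyticOrderAt g α = (n : ℕ∞) := by
    lift analyticOrderAt g α to ℕ using hot with n
    exact ⟨n, rfl⟩
  obtain ⟨h, hha, hh0, hfac⟩ := (hga.analyticOrderAt_eq_natCast (n := n)).mp hn
  have hn1 : 1 ≤ n := by
    rcases Nat.eq_zero_or_pos n with h0 | h1
    · exfalso
      have := hfac.self_of_nhds
      rw [h0, pow_zero, one_smul, hgα] at this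
      exact hh0 this.symm
    · exact h1
  -- continuity facts
  have hφc : ContinuousAt φ α := hφa.continuousAt
  have hhc : ContinuousAt h α := hha.continuousAt
  have hhφc : ContinuousAt (fun z => h (φ z)) α := by
    have : ContinuousAt h (φ α) := by rwa [hfix]
    exact this.comp hφc
  have hdc : ContinuousAt (dslope φ α) α := continuousAt_dslope_same.mpr hφa
  -- the key function F
  set F : ℂ → ℂ := fun z => (dslope φ α z) ^ n * h (φ z) - τ * h z with hFdef
  have hFc : ContinuousAt F α := ((hdc.pow n).mul hhφc).sub (continuousAt_const.mul hhc)
  -- eventually (z - α)^n * F z = 0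
  have hev : ∀ᶠ z in nhds α, (z - α) ^ n * F z = 0 := by
    have h1 : ∀ᶠ z in nhds α, g (φ z) = (φ z - α) ^ n • h (φ z) := by
      have : Tendsto φ (nhds α) (nhds α) := by
        have := hφc.tendsto; rwa [hfix] at this
      exact this.eventually hfac
    filter_upwards [h1, hfac, hnhds] with z hz1 hz2 hz3
    have hzφ : (φ z - α) ^ n * h (φ z) = τ * ((z - α) ^ n * h z) := by
      have := hgφ z hz3
      rw [hz1, hz2] at this
      simpa using this
    have hsub : φ z - α = (z - α) * dslope φ α z := by
      have := sub_smul_dslope φ α z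
      rw [hfix] at this
      simpa using this.symm
    rw [hsub, mul_pow] at hzφ
    simp only [hFdef]
    ring_nf
    ring_nf at hzφ
    linear_combination hzφ
  -- deduce F α = 0
  have hFα : F α = 0 := by
    have hev' : ∀ᶠ z in nhdsWithin α {α}ᶜ, F z = 0 := by
      filter_upwards [eventually_nhdsWithin_of_eventually_nhds hev,
        self_mem_nhdsWithin] with z hz hz'
      have hzne : z - α ≠ 0 := sub_ne_zero.mpr hz'
      exact (mul_eq_zero.mp hz).resolve_left (pow_ne_zero n hzne)
    have ht1 : Tendsto F (nhdsWithin α {α}ᶜ) (nhds (F α)) :=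
      hFc.continuousWithinAt.tendsto
    have ht2 : Tendsto F (nhdsWithin α {α}ᶜ) (nhds 0) := by
      rw [Filter.tendsto_congr' (hev' : F =ᶠ[nhdsWithin α {α}ᶜ] fun _ => (0:ℂ))]
      exact tendsto_const_nhds
    exact tendsto_nhds_unique ht1 ht2
  -- extract (deriv φ α)^n = τ
  have hkey : (deriv φ α) ^ n = τ := by
    have : (dslope φ α α) ^ n * h (φ α) - τ * h α = 0 := hFα
    rw [dslope_same, hfix] at this
    have h2 : ((deriv φ α) ^ n - τ) * h α = 0 := by ring_nf; linear_combination this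
    rcases mul_eq_zero.mp h2 with h3 | h3
    · exact sub_eq_zero.mp h3
    · exact absurd h3 hh0
  -- conclude
  have habs : (‖deriv φ α‖) ^ n = 1 := by
    rw [← norm_pow, hkey, hτ]
  have h0 : 0 ≤ ‖deriv φ α‖ := norm_nonneg _
  by_contra hne'
  rcases lt_or_gt_of_ne hne' with hlt | hgt
  · have : ‖deriv φ α‖ ^ n < 1 := pow_lt_one₀ h0 hlt (by omega)
    rw [habs] at this; exact lt_irrefl 1 this
  · have : 1 < ‖deriv φ α‖ ^ n := one_lt_pow₀ hgt (by omega)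
    rw [habs] at this; exact lt_irrefl 1 this
end

section
/- Let φ : 𝔻 → 𝔻 be holomorphic and h : 𝔻 → ℂ holomorphic with h ∘ φ = h + 1. Suppose the function z ↦ exp(2πi·h(z)) − exp(2πi·h(0)) is bounded on 𝔻 and not identically zero. Then for every z₀ ∈ 𝔻, the grand orbit Z of z₀ satisfies the Blaschke condition: ∑_{a ∈ Z} (1 − |a|) < ∞. -/
open Complex Set Metric Filter Function

private lemma normSq_identity (a w : ℂ) :
    Complex.normSq (w - a) =
      Complex.normSq (1 - (starRingEnd ℂ) a * w)
        - (1 - Complex.normSq a) * (1 - Complex.normSq w) := by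
  simp only [Complex.normSq_apply, Complex.sub_re, Complex.sub_im, Complex.one_re, Complex.one_im,
    Complex.mul_re, Complex.mul_im, Complex.conj_re, Complex.conj_im]
  ring

private lemma divide_factor {F : ℂ → ℂ} (hF : DifferentiableOn ℂ F (ball (0:ℂ) 1)) {M : ℝ}
    (hM : ∀ z ∈ ball (0:ℂ) 1, ‖F z‖ ≤ M) {a : ℂ} (ha : a ∈ ball (0:ℂ) 1)
    (ha0 : F a = 0) :
    DifferentiableOn ℂ (fun z => dslope F a z * (1 - (starRingEnd ℂ) a * z)) (ball (0:ℂ) 1) ∧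
      ∀ z ∈ ball (0:ℂ) 1, ‖dslope F a z * (1 - (starRingEnd ℂ) a * z)‖ ≤ M := by
  have hball : ∀ {w : ℂ}, w ∈ ball (0:ℂ) 1 ↔ ‖w‖ < 1 := by
    intro w; simp [Metric.mem_ball, Complex.dist_eq]
  have hta : ‖a‖ < 1 := hball.mp ha
  set t := ‖a‖ with htdef
  have ht0 : 0 ≤ t := norm_nonneg a
  -- differentiability of the quotient
  have hdsl : DifferentiableOn ℂ (dslope F a) (ball (0:ℂ) 1) := by
    intro z hz
    by_cases hza : z = a
    · subst hza
      have hA : AnalyticAt ℂ F z := hF.analyticAt (isOpen_ball.mem_nhds hz)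
      obtain ⟨p, hp⟩ := hA
      exact (AnalyticAt.differentiableAt
        ⟨p.fslope, hp.has_fpower_series_dslope_fslope⟩).differentiableWithinAt
    · exact ((differentiableAt_dslope_of_ne hza).mpr
        ((hF z hz).differentiableAt (isOpen_ball.mem_nhds hz))).differentiableWithinAt
  have hGd : DifferentiableOn ℂ (fun z => dslope F a z * (1 - (starRingEnd ℂ) a * z))
      (ball (0:ℂ) 1) :=
    hdsl.mul (((differentiable_const _).sub ((differentiable_const _).mul
      differentiable_id)).differentiableOn)
  refine ⟨hGd, ?_⟩
  set G : ℂ → ℂ := fun z => dslope F a z * (1 - (starRingEnd ℂ) a * z) with hGdef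
  have hM0 : 0 ≤ M := (norm_nonneg _).trans (hM 0 (by simp))
  -- the boundary estimate for fixed radius r
  set q : ℝ → ℝ := fun r => 1 - (1 - r ^ 2) * (1 - t ^ 2) / (1 - t) ^ 2 with hqdef
  have hc : (0:ℝ) < (1 - t) ^ 2 := by nlinarith
  have claimA : ∀ z ∈ ball (0:ℂ) 1, ∀ r : ℝ, ‖z‖ < r → t < r → r < 1 → 0 < q r →
      ‖G z‖ ≤ M / Real.sqrt (q r) := by
    intro z hz r hzr htr hr1 hq
    have hr0 : 0 < r := lt_of_le_of_lt (norm_nonneg z) hzr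
    -- boundary bound
    have hbdry : ∀ w ∈ frontier (ball (0:ℂ) r), ‖G w‖ ≤ M / Real.sqrt (q r) := by
      intro w hw
      rw [frontier_ball (0:ℂ) hr0.ne'] at hw
      have hwr : ‖w‖ = r := by simpa [Complex.dist_eq] using hw
      have hwa : w ≠ a := by
        intro hh; rw [hh] at hwr; exact (ne_of_lt htr) hwr
      have hwb : w ∈ ball (0:ℂ) 1 := hball.mpr (hwr ▸ hr1)
      -- G w = F w * (1 - conj a w) / (w - a)
      have hGw : G w = F w * (1 - (starRingEnd ℂ) a * w) / (w - a) := by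
        rw [hGdef]
        simp only [dslope_of_ne F hwa, slope_def_field, ha0, sub_zero]
        field_simp [sub_ne_zero.mpr hwa]
      -- denominator estimate
      have hN : (1 - t) ^ 2 ≤ Complex.normSq (1 - (starRingEnd ℂ) a * w) := by
        have h1 : 1 - t ≤ ‖1 - (starRingEnd ℂ) a * w‖ := by
          have := norm_sub_norm_le 1 ((starRingEnd ℂ) a * w)
          simp only [norm_one, norm_mul, Complex.norm_conj] at this
          nlinarith [norm_nonneg w, hwr, hball.mp hwb]
        calc (1 - t) ^ 2 ≤ ‖1 - (starRingEnd ℂ) a * w‖ ^ 2 := by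
              nlinarith [norm_nonneg (1 - (starRingEnd ℂ) a * w)]
          _ = Complex.normSq (1 - (starRingEnd ℂ) a * w) := Complex.sq_norm _
      set N := Complex.normSq (1 - (starRingEnd ℂ) a * w) with hNdef
      have hN0 : 0 < N := lt_of_lt_of_le hc hN
      have hd0 : 0 ≤ (1 - r ^ 2) * (1 - t ^ 2) := by
        have h1 : (0:ℝ) ≤ 1 - r ^ 2 := by nlinarith
        have h2 : (0:ℝ) ≤ 1 - t ^ 2 := by nlinarith
        exact mul_nonneg h1 h2
      have hkey : q r * N ≤ Complex.normSq (w - a) := by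
        have hid := normSq_identity a w
        have hw2 : Complex.normSq w = r ^ 2 := by
          rw [← Complex.sq_norm, hwr]
        have ha2 : Complex.normSq a = t ^ 2 := by rw [← Complex.sq_norm]
        have hdivle : (1 - r ^ 2) * (1 - t ^ 2) / N ≤
            (1 - r ^ 2) * (1 - t ^ 2) / (1 - t) ^ 2 :=
          div_le_div_of_nonneg_left hd0 hc hN
        have : q r * N ≤ (1 - (1 - r ^ 2) * (1 - t ^ 2) / N) * N := by
          apply mul_le_mul_of_nonneg_right _ hN0.le
          simp only [hqdef]
          linarith
        calc q r * N ≤ (1 - (1 - r ^ 2) * (1 - t ^ 2) / N) * N := this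
          _ = N - (1 - r ^ 2) * (1 - t ^ 2) := by field_simp
          _ = Complex.normSq (w - a) := by rw [hid, hw2, ha2]; ring
      -- translate to abs
      have habs : Real.sqrt (q r) * ‖1 - (starRingEnd ℂ) a * w‖
          ≤ ‖w - a‖ := by
        have h2 : (Real.sqrt (q r) * ‖1 - (starRingEnd ℂ) a * w‖) ^ 2
            ≤ ‖w - a‖ ^ 2 := by
          rw [mul_pow, Real.sq_sqrt hq.le, Complex.sq_norm, Complex.sq_norm]
          exact hkey
        have h3 := Real.sqrt_le_sqrt h2
        rwa [Real.sqrt_sq (by positivity), Real.sqrt_sq (norm_nonneg _)] at h3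
      have hwa0 : 0 < ‖w - a‖ := by
        simpa [norm_pos_iff] using sub_ne_zero.mpr hwa
      have hsq : 0 < Real.sqrt (q r) := Real.sqrt_pos.mpr hq
      have hfrac : ‖1 - (starRingEnd ℂ) a * w‖ / ‖w - a‖
          ≤ 1 / Real.sqrt (q r) := by
        rw [div_le_div_iff₀ hwa0 hsq]
        linarith [habs]
      have : ‖G w‖ = ‖F w‖ *
          (‖1 - (starRingEnd ℂ) a * w‖ / ‖w - a‖) := by
        rw [hGw]; simp [map_div₀, map_mul, mul_div_assoc]
      rw [this]
      calc ‖F w‖ *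
            (‖1 - (starRingEnd ℂ) a * w‖ / ‖w - a‖)
          ≤ M * (1 / Real.sqrt (q r)) :=
            mul_le_mul (hM w hwb) hfrac (by positivity) hM0
        _ = M / Real.sqrt (q r) := by ring
    -- maximum modulus
    have hsub : ball (0:ℂ) r ⊆ ball (0:ℂ) 1 := ball_subset_ball hr1.le
    have hcl : closure (ball (0:ℂ) r) ⊆ ball (0:ℂ) 1 := by
      rw [closure_ball (0:ℂ) hr0.ne']
      exact closedBall_subset_ball hr1
    have hdc : DiffContOnCl ℂ G (ball (0:ℂ) r) :=
      ⟨hGd.mono hsub, (hGd.continuousOn).mono hcl⟩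
    have hzmem : z ∈ closure (ball (0:ℂ) r) :=
      subset_closure (by simpa [Metric.mem_ball, Complex.dist_eq] using hzr)
    simpa using Complex.norm_le_of_forall_mem_frontier_norm_le isBounded_ball hdc hbdry hzmem
  -- limit as r → 1
  intro z hz
  have hq1 : Tendsto (fun r => M / Real.sqrt (q r)) (nhdsWithin 1 (Iio 1)) (nhds M) := by
    have hqc : ContinuousAt q 1 := by
      apply ContinuousAt.sub continuousAt_const
      exact (((continuousAt_const.sub (continuousAt_id.pow 2)).mul
        continuousAt_const).div continuousAt_const hc.ne')
    have hq1v : q 1 = 1 := by simp [hqdef]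
    have : ContinuousAt (fun r => M / Real.sqrt (q r)) 1 := by
      apply ContinuousAt.div continuousAt_const
      · exact (Real.continuous_sqrt.continuousAt).comp hqc
      · rw [hq1v]; simp
    have h2 := this.tendsto
    rw [hq1v] at h2
    simp only [Real.sqrt_one, div_one] at h2
    exact h2.mono_left nhdsWithin_le_nhds
  have hev : ∀ᶠ r in nhdsWithin 1 (Iio 1),
      ‖G z‖ ≤ M / Real.sqrt (q r) := by
    have hqpos : ∀ᶠ r in nhdsWithin 1 (Iio 1), 0 < q r := by
      have hqt : Tendsto q (nhdsWithin 1 (Iio 1)) (nhds 1) := by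
        have hqc : ContinuousAt q 1 := by
          apply ContinuousAt.sub continuousAt_const
          exact (((continuousAt_const.sub (continuousAt_id.pow 2)).mul
            continuousAt_const).div continuousAt_const hc.ne')
        have := hqc.tendsto.mono_left (nhdsWithin_le_nhds (s := Iio (1:ℝ)))
        simpa [hqdef] using this
      exact hqt.eventually (eventually_gt_nhds zero_lt_one)
    have hIoo : Ioo (max (‖z‖) t) 1 ∈ nhdsWithin (1:ℝ) (Iio 1) := by
      exact Ioo_mem_nhdsLT_of_mem ⟨max_lt (hball.mp hz) hta, le_refl 1⟩
    filter_upwards [hIoo, hqpos] with r hr hqr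
    exact claimA z hz r (lt_of_le_of_lt (le_max_left _ _) hr.1)
      (lt_of_le_of_lt (le_max_right _ _) hr.1) hr.2 hqr
  exact ge_of_tendsto hq1 hev

private lemma finset_prod_bound {M : ℝ} (T : Finset ℂ) :
    ∀ (F : ℂ → ℂ), DifferentiableOn ℂ F (ball (0:ℂ) 1) →
      (∀ z ∈ ball (0:ℂ) 1, ‖F z‖ ≤ M) →
      (∀ a ∈ T, a ∈ ball (0:ℂ) 1 ∧ F a = 0) →
      ‖F 0‖ ≤ M * ∏ a ∈ T, ‖a‖ := by
  induction T using Finset.induction_on with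
  | empty => intro F hF hM _; simpa using hM 0 (by simp)
  | insert a T ha ih =>
    intro F hF hM hz
    have haB := (hz a (Finset.mem_insert_self a T)).1
    have ha0 := (hz a (Finset.mem_insert_self a T)).2
    obtain ⟨hGd, hGM⟩ := divide_factor hF hM haB ha0
    set G : ℂ → ℂ := fun z => dslope F a z * (1 - (starRingEnd ℂ) a * z) with hGdef
    have hM0 : 0 ≤ M := (norm_nonneg _).trans (hM 0 (by simp))
    have hGz : ∀ b ∈ T, b ∈ ball (0:ℂ) 1 ∧ G b = 0 := by
      intro b hb
      have hball := (hz b (Finset.mem_insert_of_mem hb)).1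
      have hFb := (hz b (Finset.mem_insert_of_mem hb)).2
      have hba : b ≠ a := fun hh => ha (hh ▸ hb)
      refine ⟨hball, ?_⟩
      rw [hGdef]
      simp [dslope_of_ne F hba, slope_def_field, hFb, ha0]
    have hih := ih G hGd hGM hGz
    rw [Finset.prod_insert ha]
    by_cases ha0' : a = 0
    · subst ha0'
      rw [ha0]
      simp only [norm_zero]
      positivity
    · have hG0v : G 0 = F 0 / (0 - a) := by
        rw [hGdef]
        simp [dslope_of_ne F (Ne.symm ha0'), slope_def_field, ha0]
      have hG0 : ‖F 0‖ = ‖a‖ * ‖G 0‖ := by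
        rw [hG0v, zero_sub, norm_div, norm_neg]
        have : ‖a‖ ≠ 0 := by simpa using ha0'
        field_simp
      rw [hG0]
      calc ‖a‖ * ‖G 0‖
          ≤ ‖a‖ * (M * ∏ b ∈ T, ‖b‖) :=
            mul_le_mul_of_nonneg_left hih (norm_nonneg a)
        _ = M * (‖a‖ * ∏ b ∈ T, ‖b‖) := by ring

private lemma indicator_summable_mono {s t : Set ℂ} {f : ℂ → ℝ} (hst : s ⊆ t)
    (hf : ∀ a ∈ t, 0 ≤ f a) (ht : Summable (t.indicator f)) : Summable (s.indicator f) := by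
  apply ht.of_nonneg_of_le
  · intro a; exact Set.indicator_nonneg (fun b hb => hf b (hst hb)) a
  · intro a
    by_cases h : a ∈ s
    · rw [Set.indicator_of_mem h, Set.indicator_of_mem (hst h)]
    · rw [Set.indicator_of_notMem h]
      exact Set.indicator_nonneg hf a

private lemma core_summable {F : ℂ → ℂ} (hF : DifferentiableOn ℂ F (ball (0:ℂ) 1)) {M : ℝ}
    (hM : ∀ z ∈ ball (0:ℂ) 1, ‖F z‖ ≤ M) (h0 : F 0 ≠ 0) :
    Summable (Set.indicator {z : ℂ | z ∈ ball (0:ℂ) 1 ∧ F z = 0}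
      (fun a => 1 - ‖a‖)) := by
  classical
  set s : Set ℂ := {z : ℂ | z ∈ ball (0:ℂ) 1 ∧ F z = 0} with hsdef
  have hF0 : 0 < ‖F 0‖ := by simpa [norm_pos_iff] using h0
  have hM0 : 0 < M := lt_of_lt_of_le hF0 (hM 0 (by simp))
  have hnn : ∀ a ∈ s, 0 ≤ 1 - ‖a‖ := by
    intro a ha
    have : ‖a‖ < 1 := by
      simpa [Complex.dist_eq] using ha.1
    linarith
  apply summable_of_sum_le (c := Real.log (M / ‖F 0‖))
  · intro a; exact Set.indicator_nonneg hnn a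
  · intro u
    rw [Finset.sum_indicator_eq_sum_filter]
    set T := u.filter (fun x => x ∈ s) with hTdef
    have hTs : ∀ a ∈ T, a ∈ s := fun a haT => (Finset.mem_filter.mp haT).2
    have hpos : ∀ a ∈ T, 0 < ‖a‖ := by
      intro a haT
      rcases eq_or_ne a 0 with rfl | hne
      · exact absurd (hTs _ haT).2 h0
      · simpa [norm_pos_iff] using hne
    have hprod := finset_prod_bound T F hF hM (fun a haT => ⟨(hTs a haT).1, (hTs a haT).2⟩)
    have hprodpos : 0 < ∏ a ∈ T, ‖a‖ := Finset.prod_pos hpos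
    calc ∑ a ∈ T, (1 - ‖a‖) ≤ ∑ a ∈ T, -Real.log (‖a‖) := by
          apply Finset.sum_le_sum
          intro a haT
          have := Real.log_le_sub_one_of_pos (hpos a haT)
          linarith
      _ = -Real.log (∏ a ∈ T, ‖a‖) := by
          rw [Real.log_prod (s := T) (fun a haT => (hpos a haT).ne'), ← Finset.sum_neg_distrib]
      _ ≤ Real.log (M / ‖F 0‖) := by
          have h1 : Real.log (‖F 0‖) ≤
              Real.log (M * ∏ a ∈ T, ‖a‖) :=
            (Real.log_le_log_iff hF0 (by positivity)).mpr hprod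
          rw [Real.log_mul hM0.ne' hprodpos.ne'] at h1
          rw [Real.log_div hM0.ne' hF0.ne']
          linarith

private lemma reduced_summable {M : ℝ} :
    ∀ (n : ℕ) (F : ℂ → ℂ), DifferentiableOn ℂ F (ball (0:ℂ) 1) →
      (∀ z ∈ ball (0:ℂ) 1, ‖F z‖ ≤ M) →
      (Function.swap dslope 0)^[n] F 0 ≠ 0 →
      Summable (Set.indicator {z : ℂ | z ∈ ball (0:ℂ) 1 ∧ F z = 0}
        (fun a => 1 - ‖a‖)) := by
  intro n
  induction n with
  | zero =>
    intro F hF hM h0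
    exact core_summable hF hM (by simpa using h0)
  | succ n ih =>
    intro F hF hM hit
    by_cases h0 : F 0 = 0
    · -- divide by z
      obtain ⟨hGd, hGM⟩ := divide_factor hF hM (by simp) h0
      simp only [map_zero, zero_mul, sub_zero, mul_one] at hGd hGM
      have hit' : (Function.swap dslope 0)^[n] (dslope F 0) 0 ≠ 0 := by
        rw [Function.iterate_succ_apply] at hit
        exact hit
      have hsum := ih (dslope F 0) hGd hGM hit'
      -- zeros of F ⊆ zeros of dslope F 0 ∪ {0}
      have hsub : {z : ℂ | z ∈ ball (0:ℂ) 1 ∧ F z = 0} ⊆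
          {z : ℂ | z ∈ ball (0:ℂ) 1 ∧ dslope F 0 z = 0} ∪ {0} := by
        intro z hz
        rcases eq_or_ne z 0 with rfl | hz0
        · exact Or.inr rfl
        · left
          refine ⟨hz.1, ?_⟩
          rw [dslope_of_ne F hz0, slope_def_field, h0, hz.2]
          simp
      -- summability of union
      have hnnG : ∀ b ∈ {z : ℂ | z ∈ ball (0:ℂ) 1 ∧ dslope F 0 z = 0},
          0 ≤ 1 - ‖b‖ := by
        intro b hb
        have : ‖b‖ < 1 := by simpa [Complex.dist_eq] using hb.1
        linarith
      have hnnB : ∀ b ∈ ({0} : Set ℂ), 0 ≤ 1 - ‖b‖ := by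
        intro b hb
        simp only [Set.mem_singleton_iff] at hb
        simp [hb]
      have hone : Summable (Set.indicator ({0} : Set ℂ) (fun a => 1 - ‖a‖)) :=
        summable_subtype_iff_indicator.mp ((Set.finite_singleton (0:ℂ)).summable _)
      have hnn : ∀ a ∈ ({z : ℂ | z ∈ ball (0:ℂ) 1 ∧ dslope F 0 z = 0} ∪ {0} : Set ℂ),
          0 ≤ 1 - ‖a‖ := by
        intro a ha
        rcases ha with ha | ha
        · exact hnnG a ha
        · exact hnnB a ha
      have hunion : Summable (Set.indicator
          ({z : ℂ | z ∈ ball (0:ℂ) 1 ∧ dslope F 0 z = 0} ∪ {0} : Set ℂ)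
          (fun a => 1 - ‖a‖)) := by
        refine Summable.of_nonneg_of_le (fun a => Set.indicator_nonneg hnn a) ?_ (hsum.add hone)
        intro a
        by_cases ha : a ∈ ({z : ℂ | z ∈ ball (0:ℂ) 1 ∧ dslope F 0 z = 0} ∪ {0} : Set ℂ)
        · rw [Set.indicator_of_mem ha]
          rcases ha with ha' | ha'
          · rw [Set.indicator_of_mem ha']
            have h2 := Set.indicator_nonneg hnnB a
            linarith
          · rw [Set.indicator_of_mem ha']
            have h2 := Set.indicator_nonneg hnnG a
            linarith
        · rw [Set.indicator_of_notMem ha]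
          have ha1 : a ∉ {z : ℂ | z ∈ ball (0:ℂ) 1 ∧ dslope F 0 z = 0} := fun h => ha (Or.inl h)
          have ha2 : a ∉ ({0} : Set ℂ) := fun h => ha (Or.inr h)
          rw [Set.indicator_of_notMem ha1, Set.indicator_of_notMem ha2]
          simp
      exact indicator_summable_mono hsub hnn hunion
    · exact core_summable hF hM h0

set_option maxHeartbeats 1000000 in
theorem grand_orbit_blaschke_condition
    (φ : ℂ → ℂ) (hφ : DifferentiableOn ℂ φ (ball (0:ℂ) 1))
    (hmaps : MapsTo φ (ball (0:ℂ) 1) (ball (0:ℂ) 1))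
    (h : ℂ → ℂ) (hh : DifferentiableOn ℂ h (ball (0:ℂ) 1))
    (habel : ∀ z ∈ ball (0:ℂ) 1, h (φ z) = h z + 1)
    (hbdd : ∃ C : ℝ, ∀ z ∈ ball (0:ℂ) 1,
      ‖Complex.exp (2 * Real.pi * Complex.I * h z)
        - Complex.exp (2 * Real.pi * Complex.I * h 0)‖ ≤ C)
    (hnz : ∃ z ∈ ball (0:ℂ) 1,
      Complex.exp (2 * Real.pi * Complex.I * h z)
        - Complex.exp (2 * Real.pi * Complex.I * h 0) ≠ 0) :
    ∀ z₀ ∈ ball (0:ℂ) 1,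
      Summable (fun a : {ζ : ℂ // ζ ∈ ball (0:ℂ) 1 ∧ ∃ n m : ℕ, φ^[n] ζ = φ^[m] z₀} =>
        1 - ‖(a : ℂ)‖) := by
  intro z₀ hz₀
  obtain ⟨C, hC⟩ := hbdd
  obtain ⟨w, hw, hwnz⟩ := hnz
  set e : ℂ → ℂ := fun z => Complex.exp (2 * Real.pi * Complex.I * h z) with hedef
  set F : ℂ → ℂ := fun z => e z - e z₀ with hFdef
  have h0ball : (0:ℂ) ∈ ball (0:ℂ) 1 := by simp
  have hFd : DifferentiableOn ℂ F (ball (0:ℂ) 1) := by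
    apply DifferentiableOn.sub _ (differentiableOn_const _)
    exact (hh.const_mul (2 * Real.pi * Complex.I)).cexp
  have hFM : ∀ z ∈ ball (0:ℂ) 1, ‖F z‖ ≤ C + C := by
    intro z hz
    have h1 : F z = (e z - e 0) + -(e z₀ - e 0) := by rw [hFdef]; ring
    rw [h1]
    calc ‖(e z - e 0) + -(e z₀ - e 0)‖
        ≤ ‖e z - e 0‖ + ‖-(e z₀ - e 0)‖ := norm_add_le _ _
      _ = ‖e z - e 0‖ + ‖e z₀ - e 0‖ := by rw [norm_neg]
      _ ≤ C + C := add_le_add (hC z hz) (hC z₀ hz₀)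
  have hFnz : ∃ z ∈ ball (0:ℂ) 1, F z ≠ 0 := by
    by_contra hcon
    push_neg at hcon
    have h00 : e 0 = e z₀ := by
      have := hcon 0 h0ball
      rwa [hFdef, sub_eq_zero] at this
    have hww : e w = e z₀ := by
      have := hcon w hw
      rwa [hFdef, sub_eq_zero] at this
    apply hwnz
    rw [sub_eq_zero]
    exact hww.trans h00.symm
  have hiter : ∀ n : ℕ, ∀ z ∈ ball (0:ℂ) 1,
      φ^[n] z ∈ ball (0:ℂ) 1 ∧ h (φ^[n] z) = h z + n := by
    intro n
    induction n with
    | zero => intro z hz; simp [hz]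
    | succ n ihn =>
      intro z hz
      rw [Function.iterate_succ_apply']
      obtain ⟨hmem, hval⟩ := ihn z hz
      refine ⟨hmaps hmem, ?_⟩
      rw [habel _ hmem, hval]
      push_cast
      ring
  have horbit : ∀ ζ ∈ ball (0:ℂ) 1, (∃ n m : ℕ, φ^[n] ζ = φ^[m] z₀) → F ζ = 0 := by
    rintro ζ hζ ⟨n, m, hnm⟩
    obtain ⟨_, hv1⟩ := hiter n ζ hζ
    obtain ⟨_, hv2⟩ := hiter m z₀ hz₀
    have hkey : h ζ + n = h z₀ + m := by rw [← hv1, ← hv2, hnm]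
    rw [hFdef]
    dsimp only
    rw [sub_eq_zero, hedef]
    dsimp only
    have harg : (2:ℂ) * Real.pi * Complex.I * h ζ
        = 2 * Real.pi * Complex.I * h z₀ + (((m:ℤ) - (n:ℤ) : ℤ) : ℂ) * (2 * Real.pi * Complex.I) := by
      have hz : h ζ = h z₀ + ((m:ℂ) - n) := by linear_combination hkey
      rw [hz]
      push_cast
      ring
    rw [harg, Complex.exp_add, Complex.exp_int_mul_two_pi_mul_I, mul_one]
  have hAn : AnalyticAt ℂ F 0 := hFd.analyticAt (isOpen_ball.mem_nhds h0ball)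
  obtain ⟨p, hp⟩ := hAn
  have hpne : p ≠ 0 := by
    intro hp0
    obtain ⟨z, hzb, hzne⟩ := hFnz
    apply hzne
    have hev : F =ᶠ[nhds (0:ℂ)] 0 := by
      rw [hp0] at hp
      filter_upwards [hp.eventually_eq_zero] with y hy using hy
    have hzero := (hFd.analyticOnNhd isOpen_ball).eqOn_zero_of_preconnected_of_eventuallyEq_zero
      (convex_ball (0:ℂ) 1).isPreconnected h0ball hev
    exact hzero hzb
  have hsum := reduced_summable p.order F hFd hFM (hp.iterate_dslope_fslope_ne_zero hpne)
  have hZsub : {ζ : ℂ | ζ ∈ ball (0:ℂ) 1 ∧ ∃ n m : ℕ, φ^[n] ζ = φ^[m] z₀} ⊆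
      {z : ℂ | z ∈ ball (0:ℂ) 1 ∧ F z = 0} :=
    fun ζ hζ => ⟨hζ.1, horbit ζ hζ.1 hζ.2⟩
  have hnn : ∀ a ∈ {z : ℂ | z ∈ ball (0:ℂ) 1 ∧ F z = 0}, 0 ≤ 1 - ‖a‖ := by
    intro a ha
    have : ‖a‖ < 1 := by simpa [Complex.dist_eq] using ha.1
    linarith
  have hZsum := indicator_summable_mono hZsub hnn hsum
  exact summable_subtype_iff_indicator.mpr hZsum
end

section
/- Let φ(z) := ((z + 1/3)/(1 + z/3))², and let zₙ := φ^[n](0). Then zₙ ∈ [0,1) for all n, zₙ → 1 as n → ∞, and ρ(zₙ, z_{n+1}) → 0; i.e., φ is a parabolic self-map of zero hyperbolic step. -/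
open Complex Set Metric Filter

/-- The pseudo-hyperbolic distance on the unit disk. -/
noncomputable def pseudoDist (z w : ℂ) : ℝ :=
  ‖(z - w) / (1 - (starRingEnd ℂ) w * z)‖

noncomputable def fre : ℝ → ℝ := fun x => ((x + 1/3) / (1 + x/3))^2

lemma fre_mem {x : ℝ} (hx : x ∈ Set.Ico (0:ℝ) 1) : fre x ∈ Set.Ico (0:ℝ) 1 := by
  obtain ⟨h0, h1⟩ := hx
  have hd : (0:ℝ) < 1 + x/3 := by linarith
  have hr0 : 0 ≤ (x + 1/3) / (1 + x/3) := by positivity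
  have hr1 : (x + 1/3) / (1 + x/3) < 1 := by
    rw [div_lt_one hd]; linarith
  constructor
  · rw [fre]; positivity
  · exact pow_lt_one₀ hr0 hr1 (by norm_num)

lemma fre_ge {x : ℝ} (hx : x ∈ Set.Ico (0:ℝ) 1) : x ≤ fre x := by
  obtain ⟨h0, h1⟩ := hx
  have hd : (1:ℝ) + x/3 ≠ 0 := by positivity
  have key : fre x - x = (1-x)^3 / (3+x)^2 := by
    rw [fre]; field_simp; ring
  have h2 : (0:ℝ) ≤ (1-x)^3 / (3+x)^2 :=
    div_nonneg (pow_nonneg (by linarith) 3) (pow_nonneg (by linarith) 2)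
  linarith

lemma iter_mem : ∀ n : ℕ, fre^[n] 0 ∈ Set.Ico (0:ℝ) 1 := by
  intro n
  induction n with
  | zero => simp
  | succ n ih => rw [Function.iterate_succ_apply']; exact fre_mem ih

lemma fre_contAt {x : ℝ} (hx : 0 ≤ x) : ContinuousAt fre x := by
  have hd : (1:ℝ) + x/3 ≠ 0 := by positivity
  unfold fre
  fun_prop (disch := assumption)

lemma iter_tendsto : Tendsto (fun n : ℕ => fre^[n] 0) atTop (nhds 1) := by
  have hmono : Monotone (fun n : ℕ => fre^[n] 0) := by
    apply monotone_nat_of_le_succ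
    intro n
    rw [Function.iterate_succ_apply']
    exact fre_ge (iter_mem n)
  rcases tendsto_of_monotone hmono with h | ⟨L, hL⟩
  · exfalso
    have := (h.eventually_ge_atTop 2).exists
    obtain ⟨n, hn⟩ := this
    have := (iter_mem n).2
    linarith
  · have hL1 : L ≤ 1 := le_of_tendsto' hL (fun n => (iter_mem n).2.le)
    have hL0 : (0:ℝ) ≤ L := ge_of_tendsto' hL (fun n => (iter_mem n).1)
    have hshift : Tendsto (fun n : ℕ => fre^[n+1] 0) atTop (nhds L) :=
      hL.comp (tendsto_add_atTop_nat 1)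
    have hcomp : Tendsto (fun n : ℕ => fre (fre^[n] 0)) atTop (nhds (fre L)) :=
      (fre_contAt hL0).tendsto.comp hL
    have heq : fre L = L := by
      apply tendsto_nhds_unique _ hshift
      simpa [Function.iterate_succ_apply'] using hcomp
    have hLeq : L = 1 := by
      by_contra hne
      have hlt : L < 1 := lt_of_le_of_ne hL1 hne
      have hd : (1:ℝ) + L/3 ≠ 0 := by positivity
      have key : fre L - L = (1-L)^3 / (3+L)^2 := by
        rw [fre]; field_simp; ring
      rw [heq, sub_self] at key
      have h1 : (0:ℝ) < (1-L)^3 / (3+L)^2 :=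
        div_pos (pow_pos (by linarith) 3) (pow_pos (by linarith) 2)
      linarith
    rwa [hLeq] at hL

lemma pseudo_real (a : ℝ) (ha : a ∈ Set.Ico (0:ℝ) 1) :
    pseudoDist (a : ℂ) ((fre a : ℝ) : ℂ) = (1-a)^2 / (9*a^2 + 14*a + 9) := by
  obtain ⟨h0, h1⟩ := ha
  obtain ⟨hb0, hb1⟩ := fre_mem ⟨h0, h1⟩
  have hab : a * fre a < 1 := by nlinarith
  have hge : a ≤ fre a := fre_ge ⟨h0, h1⟩
  have hd : (1:ℝ) + a/3 ≠ 0 := by positivity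
  have hq : (9:ℝ)*a^2 + 14*a + 9 > 0 := by positivity
  unfold pseudoDist
  rw [Complex.conj_ofReal]
  have : ((a:ℂ) - (fre a : ℝ)) / (1 - (fre a : ℝ) * (a:ℂ))
      = (((a - fre a) / (1 - fre a * a) : ℝ) : ℂ) := by push_cast; ring
  rw [this, Complex.norm_real, Real.norm_eq_abs, abs_div,
    abs_of_nonpos (by linarith : a - fre a ≤ 0),
    abs_of_pos (by nlinarith : (0:ℝ) < 1 - fre a * a)]
  rw [div_eq_div_iff (by nlinarith) hq.ne']
  rw [fre]
  field_simp
  ring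

theorem example_map_zero_hyperbolic_step :
    let φ : ℂ → ℂ := fun z => ((z + 1/3) / (1 + z/3))^2
    (∀ n : ℕ, ∃ x : ℝ, x ∈ Set.Ico (0:ℝ) 1 ∧ φ^[n] 0 = (x : ℂ)) ∧
    Tendsto (fun n : ℕ => φ^[n] 0) atTop (nhds (1 : ℂ)) ∧
    Tendsto (fun n : ℕ => pseudoDist (φ^[n] 0) (φ^[n+1] 0)) atTop (nhds 0) := by
  intro φ
  have hiter : ∀ n : ℕ, φ^[n] 0 = ((fre^[n] 0 : ℝ) : ℂ) := by
    intro n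
    induction n with
    | zero => simp
    | succ n ih =>
      rw [Function.iterate_succ_apply', Function.iterate_succ_apply', ih]
      show ((((fre^[n] 0 : ℝ) : ℂ) + 1/3) / (1 + ((fre^[n] 0 : ℝ) : ℂ)/3))^2
          = ((fre (fre^[n] 0) : ℝ) : ℂ)
      rw [fre]
      push_cast
      ring
  refine ⟨fun n => ⟨fre^[n] 0, iter_mem n, hiter n⟩, ?_, ?_⟩
  · have : Tendsto (fun n : ℕ => ((fre^[n] 0 : ℝ) : ℂ)) atTop (nhds ((1:ℝ):ℂ)) :=
      (Complex.continuous_ofReal.tendsto 1).comp iter_tendsto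
    simpa [hiter] using (this.congr (fun n => (hiter n).symm))
  · have hx := iter_tendsto
    have hnum : Tendsto (fun n : ℕ => (1 - fre^[n] 0)^2) atTop (nhds ((1-1)^2)) :=
      (hx.const_sub 1).pow 2
    have hden : Tendsto (fun n : ℕ => 9*(fre^[n] 0)^2 + 14*(fre^[n] 0) + 9)
        atTop (nhds (9*1^2 + 14*1 + 9)) :=
      (((hx.pow 2).const_mul 9).add (hx.const_mul 14)).add_const 9
    have hdiv := hnum.div hden (by norm_num)
    norm_num at hdiv
    apply hdiv.congr
    intro n
    rw [hiter n, hiter (n+1), Function.iterate_succ_apply']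
    exact (pseudo_real _ (iter_mem n)).symm
end
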